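/- Let q be a prime power with q ≡ 3 (mod 4) and let 𝔽_q be the finite field with q elements. Let D := {x ∈ 𝔽_q : x is a nonzero square} be the set of nonzero quadratic residues. Then D is a (q, (q−1)/2, (q−3)/4)-difference set in the additive group of 𝔽_q: |D| = (q−1)/2, and for every nonzero a ∈ 𝔽_q the number of ordered pairs (x,y) ∈ D×D with x−y = a equals (q−3)/4. -/

import Mathlib

open Finset

/-- In a field of characteristic ≠ 2, a nonzero element with a square root has
exactly two square roots among the nonzero elements. -/
lemma paley_sqrt_fiber_card {F : Type*} [Field F] [Fintype F] [DecidableEq F]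
    (h2 : (2 : F) ≠ 0) {x s₀ : F} (hx : x ≠ 0) (hs : s₀ ^ 2 = x) :
    (Finset.univ.filter (fun y : F => y ≠ 0 ∧ y ^ 2 = x)).card = 2 := by
  have hs0 : s₀ ≠ 0 := by
    intro h; apply hx; rw [← hs, h]; ring
  have hne : s₀ ≠ -s₀ := by
    intro h
    have : (2 : F) * s₀ = 0 := by linear_combination h
    rcases mul_eq_zero.mp this with h' | h'
    · exact h2 h'
    · exact hs0 h'
  have : (Finset.univ.filter (fun y : F => y ≠ 0 ∧ y ^ 2 = x)) = {s₀, -s₀} := by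
    ext y
    simp only [mem_filter, mem_univ, true_and, mem_insert, mem_singleton]
    constructor
    · rintro ⟨hy0, hy⟩
      have h0 : (y - s₀) * (y + s₀) = 0 := by linear_combination hy - hs
      rcases mul_eq_zero.mp h0 with h' | h'
      · left; linear_combination h'
      · right; linear_combination h'
    · rintro (rfl | rfl)
      · exact ⟨hs0, hs⟩
      · exact ⟨neg_ne_zero.mpr hs0, by linear_combination hs⟩
  rw [this, Finset.card_pair hne]

/-- Paley difference sets: for a finite field `F` of order `q ≡ 3 (mod 4)`, the set
`D` of nonzero squares is a `(q, (q−1)/2, (q−3)/4)`-difference set in the additive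
group of `F`. -/
theorem paley_difference_set
    (q : ℕ) (hq : ∃ p r : ℕ, p.Prime ∧ 0 < r ∧ q = p ^ r) (hq4 : q % 4 = 3)
    {F : Type*} [Field F] [Fintype F] [DecidableEq F]
    (hF : Fintype.card F = q)
    (D : Finset F)
    (hD : ∀ x : F, x ∈ D ↔ x ≠ 0 ∧ ∃ y : F, y ≠ 0 ∧ x = y ^ 2) :
    D.card = (q - 1) / 2 ∧
      ∀ a : F, a ≠ 0 →
        ((D ×ˢ D).filter (fun p => p.1 - p.2 = a)).card = (q - 3) / 4 := by
  classical
  have hq3 : 3 ≤ q := by omega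
  have hchar : ringChar F ≠ 2 := by
    intro h
    have := FiniteField.even_card_of_char_two (F := F) h
    rw [hF] at this; omega
  have h2 : (2 : F) ≠ 0 := Ring.two_ne_zero hchar
  have hns1 : ¬ IsSquare (-1 : F) := by
    rw [FiniteField.isSquare_neg_one_iff, hF]
    simp [hq4]
  -- Part 1: cardinality of D
  have hNz : (Finset.univ.filter (fun y : F => y ≠ 0)).card = q - 1 := by
    rw [Finset.filter_ne', Finset.card_erase_of_mem (mem_univ 0), Finset.card_univ, hF]
  have hmaps : ∀ y ∈ Finset.univ.filter (fun y : F => y ≠ 0), y ^ 2 ∈ D := by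
    intro y hy
    rw [mem_filter] at hy
    rw [hD]
    exact ⟨pow_ne_zero 2 hy.2, y, hy.2, rfl⟩
  have hcard1 : q - 1 = 2 * D.card := by
    rw [← hNz, Finset.card_eq_sum_card_fiberwise hmaps]
    have hfib : ∀ x ∈ D,
        ((Finset.univ.filter (fun y : F => y ≠ 0)).filter (fun y => y ^ 2 = x)).card = 2 := by
      intro x hx
      rw [hD] at hx
      obtain ⟨hx0, y, hy0, hxy⟩ := hx
      rw [Finset.filter_filter]
      exact paley_sqrt_fiber_card h2 hx0 hxy.symm
    rw [Finset.sum_congr rfl hfib, Finset.sum_const, smul_eq_mul, mul_comm]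
  refine ⟨by omega, ?_⟩
  -- Part 2
  intro a ha
  set N : Finset (F × F) := (D ×ˢ D).filter (fun p => p.1 - p.2 = a) with hN
  set T : Finset (F × F) := Finset.univ.filter (fun p : F × F => p.1 ^ 2 - p.2 ^ 2 = a) with hT
  -- T.card = q - 1
  have hTcard : T.card = q - 1 := by
    rw [← hNz]
    refine Finset.card_nbij' (fun p => p.1 + p.2)
      (fun u => ((u + a * u⁻¹) / 2, (u - a * u⁻¹) / 2)) ?_ ?_ ?_ ?_
    · rintro ⟨s, t⟩ hp
      rw [Finset.mem_coe] at hp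
      simp only [hT, mem_filter] at hp
      rw [Finset.mem_coe, mem_filter]
      refine ⟨mem_univ _, fun h => ha ?_⟩
      have := hp.2
      simp only at this h ⊢
      linear_combination -this + (s - t) * h
    · intro u hu
      rw [Finset.mem_coe, mem_filter] at hu
      rw [Finset.mem_coe, hT, mem_filter]
      refine ⟨mem_univ _, ?_⟩
      have hu0 := hu.2
      field_simp
      ring
    · rintro ⟨s, t⟩ hp
      rw [Finset.mem_coe] at hp
      simp only [hT, mem_filter] at hp
      have heq : s ^ 2 - t ^ 2 = a := hp.2
      have hst : s + t ≠ 0 := by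
        intro h
        apply ha
        linear_combination -heq + (s - t) * h
      have hinv : a * (s + t)⁻¹ = s - t := by
        field_simp
        linear_combination -heq
      simp only [Prod.mk.injEq]
      constructor
      · rw [hinv]; field_simp; ring
      · rw [hinv]; field_simp; ring
    · intro u hu
      rw [Finset.mem_coe, mem_filter] at hu
      have hu0 := hu.2
      field_simp
      ring
  -- bad set B
  set B : Finset (F × F) := T.filter (fun p => p.1 = 0 ∨ p.2 = 0) with hB
  set S : Finset (F × F) := T.filter (fun p => ¬(p.1 = 0 ∨ p.2 = 0)) with hS
  have hBS : B.card + S.card = T.card := Finset.card_filter_add_card_filter_not _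
  -- B.card = 2
  have hBcard : B.card = 2 := by
    by_cases hsq : IsSquare a
    · obtain ⟨b, hb⟩ := hsq
      have hb0 : b ≠ 0 := by
        intro h; apply ha; rw [hb, h]; ring
      have hbne : (b, (0:F)) ≠ (-b, (0:F)) := by
        intro h
        rw [Prod.mk.injEq] at h
        have : (2 : F) * b = 0 := by linear_combination h.1
        rcases mul_eq_zero.mp this with h' | h'
        · exact h2 h'
        · exact hb0 h'
      have : B = {(b, (0:F)), (-b, (0:F))} := by
        ext ⟨s, t⟩
        rw [hB, hT, Finset.filter_filter, mem_filter]
        simp only [mem_univ, true_and, mem_insert, mem_singleton, Prod.mk.injEq]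
        constructor
        · rintro ⟨heq, (rfl | rfl)⟩
          · -- s = 0 : impossible since -a would be a square
            exfalso
            have ht0 : t ≠ 0 := by
              intro h; apply ha; rw [← heq, h]; ring
            apply hns1
            refine ⟨b * t⁻¹, ?_⟩
            field_simp
            linear_combination hb + heq
          · -- t = 0 : s^2 = a
            have h0 : (s - b) * (s + b) = 0 := by linear_combination heq + hb
            rcases mul_eq_zero.mp h0 with h' | h'
            · left; exact ⟨by linear_combination h', rfl⟩
            · right; exact ⟨by linear_combination h', rfl⟩
        · rintro (⟨rfl, rfl⟩ | ⟨rfl, rfl⟩)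
          · exact ⟨by linear_combination -hb, Or.inr rfl⟩
          · exact ⟨by linear_combination -hb, Or.inr rfl⟩
      rw [this, Finset.card_pair hbne]
    · -- a is not a square, so -a is a square
      have hsqna : IsSquare (-a) := by
        have h1 : quadraticChar F (-1) = -1 :=
          quadraticChar_neg_one_iff_not_isSquare.mpr hns1
        have h2' : quadraticChar F a = -1 :=
          quadraticChar_neg_one_iff_not_isSquare.mpr hsq
        have h3 : quadraticChar F (-a) = 1 := by
          rw [show (-a : F) = -1 * a by ring, map_mul, h1, h2']; ring
        exact (quadraticChar_one_iff_isSquare (neg_ne_zero.mpr ha)).mp h3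
      obtain ⟨c, hc⟩ := hsqna
      have hc0 : c ≠ 0 := by
        intro h
        apply ha
        have h0 : -a = 0 := by rw [hc, h]; ring
        linear_combination -h0
      have hbne : ((0:F), c) ≠ ((0:F), -c) := by
        intro h
        rw [Prod.mk.injEq] at h
        have : (2 : F) * c = 0 := by linear_combination h.2
        rcases mul_eq_zero.mp this with h' | h'
        · exact h2 h'
        · exact hc0 h'
      have : B = {((0:F), c), ((0:F), -c)} := by
        ext ⟨s, t⟩
        rw [hB, hT, Finset.filter_filter, mem_filter]
        simp only [mem_univ, true_and, mem_insert, mem_singleton, Prod.mk.injEq]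
        constructor
        · rintro ⟨heq, (rfl | rfl)⟩
          · -- s = 0 : t^2 = -a = c^2
            have h0 : (t - c) * (t + c) = 0 := by linear_combination -heq + hc
            rcases mul_eq_zero.mp h0 with h' | h'
            · left; exact ⟨rfl, by linear_combination h'⟩
            · right; exact ⟨rfl, by linear_combination h'⟩
          · -- t = 0 : s^2 = a, contradiction
            exfalso
            apply hsq
            exact ⟨s, by linear_combination -heq⟩
        · rintro (⟨rfl, rfl⟩ | ⟨rfl, rfl⟩)
          · exact ⟨by linear_combination hc, Or.inl rfl⟩
          · exact ⟨by linear_combination hc, Or.inl rfl⟩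
      rw [this, Finset.card_pair hbne]
  -- S.card = 4 * N.card
  have hmaps2 : ∀ p ∈ S, (p.1 ^ 2, p.2 ^ 2) ∈ N := by
    rintro ⟨s, t⟩ hp
    rw [hS, hT, Finset.filter_filter, mem_filter] at hp
    obtain ⟨-, heq, hne⟩ := hp
    push_neg at hne
    rw [hN, mem_filter, mem_product]
    refine ⟨⟨?_, ?_⟩, heq⟩
    · rw [hD]; exact ⟨pow_ne_zero 2 hne.1, s, hne.1, rfl⟩
    · rw [hD]; exact ⟨pow_ne_zero 2 hne.2, t, hne.2, rfl⟩
  have hScard2 : S.card = N.card * 4 := by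
    rw [Finset.card_eq_sum_card_fiberwise hmaps2]
    rw [Finset.sum_congr rfl (fun b hb => ?_), Finset.sum_const, smul_eq_mul]
    obtain ⟨x, y⟩ := b
    rw [hN, mem_filter, mem_product] at hb
    obtain ⟨⟨hx, hy⟩, hxy⟩ := hb
    rw [hD] at hx hy
    obtain ⟨hx0, u, hu0, hxu⟩ := hx
    obtain ⟨hy0, v, hv0, hyv⟩ := hy
    have : S.filter (fun p => (p.1 ^ 2, p.2 ^ 2) = (x, y)) =
        (Finset.univ.filter (fun s : F => s ≠ 0 ∧ s ^ 2 = x)) ×ˢ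
          (Finset.univ.filter (fun t : F => t ≠ 0 ∧ t ^ 2 = y)) := by
      ext ⟨s, t⟩
      rw [hS, hT, Finset.filter_filter, Finset.filter_filter, mem_filter, mem_product,
        mem_filter, mem_filter]
      simp only [mem_univ, true_and, Prod.mk.injEq]
      constructor
      · rintro ⟨heq, hne, hfx, hfy⟩
        push_neg at hne
        exact ⟨⟨hne.1, hfx⟩, hne.2, hfy⟩
      · rintro ⟨⟨hs0, hfx⟩, ht0, hfy⟩
        refine ⟨?_, ?_, hfx, hfy⟩
        · rw [hfx, hfy]; simpa using hxy
        · push_neg; exact ⟨hs0, ht0⟩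
    rw [this, Finset.card_product,
      paley_sqrt_fiber_card h2 hx0 hxu.symm, paley_sqrt_fiber_card h2 hy0 hyv.symm]
  omega
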